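/- Let n ≥ 2 and let p_1(z),...,p_m(z) be homogeneous polynomials of degree d ≥ 1 in z = (z_1,...,z_n) ∈ ℂⁿ that are linearly independent in ℂ[z], and write p(z) = (p_1(z),...,p_m(z)). Assume (Q^(1), r^(1)(z)), ..., (Q^(k), r^(k)(z)) are solutions of the polynomial identity p(z)Q = r(z)z such that the matrices Q^(1),...,Q^(k) are linearly independent in the space of complex m×n matrices. Let κ be the dimension of V = ker Q^(1) ∩ ... ∩ ker Q^(k), where ker Q = {v ∈ ℂ^m : vQ = 0}, and if κ ≥ 1 let v_1,...,v_κ ∈ ℂ^m be linearly independent vectors spanning V. Then there exist ℂ^m-valued linear (degree-one homogeneous) polynomial maps s^(1)(z),...,s^(k)(z) and polynomials h_1(z),...,h_κ(z) such that p(z) = Σ_{j=1}^κ h_j(z) v_j + Σ_{i=1}^k r^(i)(z) s^(i)(z), where the first sum is vacuous if κ = 0. -/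

import Mathlib

open MvPolynomial

lemma linmap_apply_eq_sum {ι σ : Type*} [Fintype ι] [DecidableEq ι]
    (T : (ι → ℂ) →ₗ[ℂ] (σ → ℂ)) (u : ι → ℂ) (b : σ) :
    T u b = ∑ j, T (Pi.single j 1) b * u j := by
  have hu : u = ∑ j, u j • (Pi.single j 1 : ι → ℂ) := by
    funext x
    simp [Finset.sum_apply, Pi.single_apply]
  conv_lhs => rw [hu]
  rw [map_sum]
  simp [Finset.sum_apply, mul_comm]

theorem p_decomposition (n m d k κ : ℕ) (hn : 2 ≤ n) (hd : 1 ≤ d)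
    (p : Fin m → MvPolynomial (Fin n) ℂ)
    (hhom : ∀ j, (p j).IsHomogeneous d)
    (hli : LinearIndependent ℂ p)
    (Q : Fin k → Matrix (Fin m) (Fin n) ℂ)
    (r : Fin k → MvPolynomial (Fin n) ℂ)
    (hr : ∀ i, (r i).IsHomogeneous (d - 1))
    (hsol : ∀ i, ∀ ν : Fin n, (∑ j, Q i j ν • p j) = r i * X ν)
    (hQli : LinearIndependent ℂ Q)
    (hκ : Module.finrank ℂ
        ↥(⨅ i, LinearMap.ker (Matrix.vecMulLinear (Q i))) = κ)
    (v : Fin κ → (Fin m → ℂ))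
    (hvli : LinearIndependent ℂ v)
    (hvspan : Submodule.span ℂ (Set.range v)
        = ⨅ i, LinearMap.ker (Matrix.vecMulLinear (Q i))) :
    ∃ (s : Fin k → Fin m → MvPolynomial (Fin n) ℂ)
      (h : Fin κ → MvPolynomial (Fin n) ℂ),
      (∀ i j, (s i j).IsHomogeneous 1) ∧
      ∀ j, p j = (∑ a, C (v a j) * h a) + ∑ i, r i * s i j := by
  classical
  set V := ⨅ i, LinearMap.ker (Matrix.vecMulLinear (Q i)) with hVdef
  -- the joint "row multiplication" map
  let Φ : (Fin m → ℂ) →ₗ[ℂ] (Fin k × Fin n → ℂ) :=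
    { toFun := fun u iν => ∑ j, u j * Q iν.1 j iν.2
      map_add' := fun u w => by
        funext iν; simp [add_mul, Finset.sum_add_distrib]
      map_smul' := fun c u => by
        funext iν; simp [Finset.mul_sum, mul_assoc] }
  have hkerΦ : LinearMap.ker Φ = V := by
    ext u
    simp only [LinearMap.mem_ker, hVdef, Submodule.mem_iInf, LinearMap.mem_ker,
      Matrix.vecMulLinear_apply]
    constructor
    · intro h i
      funext ν
      have := congrFun h (i, ν)
      simpa [Φ, Matrix.vecMul, dotProduct] using this
    · intro h
      funext iν
      have := congrFun (h iν.1) iν.2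
      simpa [Φ, Matrix.vecMul, dotProduct] using this
  obtain ⟨W, hW⟩ := Submodule.exists_isCompl V
  set πV := V.linearProjOfIsCompl W hW with hπV
  set πW := W.linearProjOfIsCompl V hW.symm with hπW
  have hproj : ∀ u : Fin m → ℂ, (πV u : Fin m → ℂ) + (πW u : Fin m → ℂ) = u :=
    fun u => Submodule.projection_add_projection_eq_self hW u
  -- left inverse of Φ restricted to W
  have hker_f : LinearMap.ker (Φ.comp W.subtype) = ⊥ := by
    rw [eq_bot_iff]
    rintro ⟨w, hwW⟩ hw
    have hΦw : Φ w = 0 := hw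
    have hwV : w ∈ V := by rw [← hkerΦ]; exact hΦw
    have hw0 : w = 0 := (Submodule.disjoint_def.mp hW.disjoint) w hwV hwW
    exact (Submodule.mem_bot ℂ).mpr (Subtype.ext hw0)
  obtain ⟨g, hg⟩ := (Φ.comp W.subtype).exists_leftInverse_of_injective hker_f
  let Ψ : (Fin k × Fin n → ℂ) →ₗ[ℂ] (Fin m → ℂ) := W.subtype.comp g
  -- basis of V from v
  have hvmem : ∀ a, v a ∈ V := fun a =>
    hvspan ▸ Submodule.subset_span (Set.mem_range_self a)
  let v' : Fin κ → V := fun a => ⟨v a, hvmem a⟩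
  have hv'li : LinearIndependent ℂ v' := by
    apply LinearIndependent.of_comp V.subtype
    convert hvli
    rfl
  have hv'span : ⊤ ≤ Submodule.span ℂ (Set.range v') := by
    rintro ⟨x, hx⟩ -
    have hx' : x ∈ Submodule.span ℂ (Set.range v) := by rw [hvspan]; exact hx
    obtain ⟨c, hc⟩ := (Submodule.mem_span_range_iff_exists_fun ℂ).mp hx'
    have : (⟨x, hx⟩ : V) = ∑ a, c a • v' a := by
      apply Subtype.ext
      push_cast
      exact hc.symm
    rw [this]
    exact Submodule.sum_mem _ fun a _ =>
      Submodule.smul_mem _ _ (Submodule.subset_span (Set.mem_range_self a))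
  let b : Module.Basis (Fin κ) ℂ V := Module.Basis.mk hv'li hv'span
  let Θ : (Fin m → ℂ) →ₗ[ℂ] (Fin κ → ℂ) :=
    (Finsupp.linearEquivFunOnFinite ℂ ℂ (Fin κ)).toLinearMap.comp
      (b.repr.toLinearMap.comp πV)
  -- the key pointwise identity
  have hstar : ∀ (u : Fin m → ℂ) (j : Fin m),
      u j = (∑ a, Θ u a * v a j) + Ψ (Φ u) j := by
    intro u j
    have h1 : (πV u : Fin m → ℂ) = ∑ a, Θ u a • v a := by
      conv_lhs => rw [← b.sum_repr (πV u)]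
      push_cast
      refine Finset.sum_congr rfl fun a _ => ?_
      congr 1
      show (b a : Fin m → ℂ) = v a
      rw [show b a = v' a from Module.Basis.mk_apply hv'li hv'span a]
    have hΦπV : Φ (πV u : Fin m → ℂ) = 0 := by
      have : (πV u : Fin m → ℂ) ∈ LinearMap.ker Φ := by
        rw [hkerΦ]; exact (πV u).2
      simpa [LinearMap.mem_ker] using this
    have h2 : Ψ (Φ u) = (πW u : Fin m → ℂ) := by
      have hΦu : Φ u = (Φ.comp W.subtype) (πW u) := by
        conv_lhs => rw [← hproj u]
        rw [map_add, hΦπV, zero_add]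
        rfl
      rw [hΦu]
      have h3 := LinearMap.ext_iff.mp hg (πW u)
      show (W.subtype) (g ((Φ.comp W.subtype) (πW u))) = _
      rw [← LinearMap.comp_apply g, h3]
      rfl
    conv_lhs => rw [← hproj u]
    rw [h2]
    simp [h1, Finset.sum_apply]
  -- now assemble
  refine ⟨fun i j => ∑ ν, C (Ψ (Pi.single (i, ν) 1) j) * X ν,
          fun a => ∑ j, C (Θ (Pi.single j 1) a) * p j, ?_, ?_⟩
  · intro i j
    apply MvPolynomial.IsHomogeneous.sum
    intro ν _
    simpa using (isHomogeneous_C (Fin n) (Ψ (Pi.single (i, ν) 1) j)).mul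
      (isHomogeneous_X ℂ ν)
  · intro j
    apply MvPolynomial.ext
    intro μ
    set u : Fin m → ℂ := fun j' => coeff μ (p j') with hu
    have hΦu : ∀ iν : Fin k × Fin n, Φ u iν = coeff μ (r iν.1 * X iν.2) := by
      rintro ⟨i, ν⟩
      rw [← hsol i ν, coeff_sum]
      simp only [coeff_smul, smul_eq_mul]
      have hΦ : Φ u (i, ν) = ∑ j', u j' * Q i j' ν := rfl
      rw [hΦ]
      exact Finset.sum_congr rfl fun j' _ => mul_comm _ _
    have hch : ∀ a, coeff μ (∑ j', C (Θ (Pi.single j' 1) a) * p j') = Θ u a := by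
      intro a
      rw [coeff_sum]
      simp only [coeff_C_mul]
      exact (linmap_apply_eq_sum Θ u a).symm
    have hcs : coeff μ (∑ i, r i * ∑ ν, C (Ψ (Pi.single (i, ν) 1) j) * X ν)
        = Ψ (Φ u) j := by
      rw [coeff_sum]
      rw [linmap_apply_eq_sum Ψ (Φ u) j, Fintype.sum_prod_type]
      refine Finset.sum_congr rfl fun i _ => ?_
      rw [Finset.mul_sum, coeff_sum]
      refine Finset.sum_congr rfl fun ν _ => ?_
      have : r i * (C (Ψ (Pi.single (i, ν) 1) j) * X ν)
          = C (Ψ (Pi.single (i, ν) 1) j) * (r i * X ν) := by ring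
      rw [this, coeff_C_mul, hΦu (i, ν)]
    rw [coeff_add, coeff_sum, hcs]
    have : ∑ a, coeff μ (C (v a j) * (∑ j', C (Θ (Pi.single j' 1) a) * p j'))
        = ∑ a, Θ u a * v a j := by
      refine Finset.sum_congr rfl fun a _ => ?_
      rw [coeff_C_mul, hch a, mul_comm]
    rw [this]
    exact hstar u j
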